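/- For m ∈ ℤ, σ ∈ ℝ, k ∈ ℕⁿ and l ∈ (ℤ_{≥0})ⁿ, the shifted-domain iterated log-sine integral satisfies Ls_k^l(2mπ, 2mπ+σ) = Σ_{j ≤ l} (2mπ)^{|j|} (∏_u C(l_u, j_u)) Ls_{k-j}^{l-j}(σ), where the sum is over all j = (j₁,…,j_n) ∈ (ℤ_{≥0})ⁿ with j_u ≤ l_u for all u. -/

import Mathlib

open MeasureTheory Real

/-- `A θ = log |2 sin (θ/2)|`. -/
noncomputable def A (θ : ℝ) : ℝ := Real.log |2 * Real.sin (θ / 2)|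

/-- Nested iterated integral; the list is in reverse order (outermost variable first). -/
noncomputable def LsNest (ρ : ℝ) : List (ℕ × ℕ) → ℝ → ℝ
  | [] => fun _ => 1
  | p :: rest => fun σ => ∫ θ in ρ..σ, θ ^ p.2 * A θ ^ (p.1 - 1 - p.2) * LsNest ρ rest θ

/-- The iterated log-sine integral `Ls_k^l(ρ; σ)`. -/
noncomputable def Ls {n : ℕ} (k l : Fin n → ℕ) (ρ σ : ℝ) : ℝ :=
  (-1 : ℝ) ^ n * LsNest ρ ((List.ofFn fun u => (k u, l u)).reverse) σ

open Filter Set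


lemma A_shift (θ : ℝ) (m : ℤ) : A (θ + 2 * m * π) = A θ := by
  unfold A
  have h : (θ + 2 * m * π) / 2 = θ / 2 + m * π := by ring
  have h1 : |((-1:ℝ)) ^ m| = 1 := by
    rcases Int.even_or_odd m with he | ho
    · simp [he.neg_one_zpow]
    · simp [ho.neg_one_zpow]
  rw [h, Real.sin_add_int_mul_pi, ← mul_assoc, abs_mul, abs_mul, abs_mul, h1, mul_one]

lemma A_neg (θ : ℝ) : A (-θ) = A θ := by
  unfold A
  rw [show -θ / 2 = -(θ/2) by ring, Real.sin_neg]
  simp [abs_mul]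

lemma A_measurable : Measurable A :=
  Real.measurable_log.comp ((continuous_abs.comp ((continuous_const.mul
    (Real.continuous_sin.comp (continuous_id.div_const 2))))).measurable)

lemma tendsto_aux (e : ℕ) (c : ℝ) (he : 1 ≤ e) :
    Tendsto (fun θ : ℝ => (|Real.log θ| + c) * θ ^ ((1:ℝ)/(2*e)))
      (nhdsWithin 0 (Set.Ioi 0)) (nhds 0) := by
  set s : ℝ := (1:ℝ)/(2*e) with hs_def
  have hs : (0:ℝ) < s := by positivity
  have h1 : Tendsto (fun θ : ℝ => -(Real.log θ * θ ^ s)) (nhdsWithin 0 (Set.Ioi 0)) (nhds 0) := by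
    simpa using (tendsto_log_mul_rpow_nhdsGT_zero hs).neg
  have h2 : Tendsto (fun θ : ℝ => c * θ ^ s) (nhdsWithin 0 (Set.Ioi 0)) (nhds 0) := by
    have h3 : Tendsto (fun θ : ℝ => θ ^ s) (nhds 0) (nhds ((0:ℝ) ^ s)) :=
      (Real.continuousAt_rpow_const 0 s (Or.inr hs.le)).tendsto
    rw [Real.zero_rpow hs.ne'] at h3
    simpa using (h3.mono_left nhdsWithin_le_nhds).const_mul c
  have h3 := h1.add h2
  rw [add_zero] at h3
  apply h3.congr'
  filter_upwards [Ioo_mem_nhdsGT_of_mem (Set.mem_Ico.2 ⟨le_refl (0:ℝ), zero_lt_one⟩)] with θ hθ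
  have : Real.log θ ≤ 0 := Real.log_nonpos hθ.1.le hθ.2.le
  rw [abs_of_nonpos this]; ring

lemma logpow_int (e : ℕ) (c b : ℝ) (hb : 0 < b) (hc : 0 ≤ c) :
    IntegrableOn (fun θ : ℝ => (|Real.log θ| + c) ^ e) (Set.Ioc 0 b) volume := by
  have hmeas : AEStronglyMeasurable (fun θ : ℝ => (|Real.log θ| + c) ^ e)
      (volume.restrict (Set.Ioc (0:ℝ) b)) :=
    (((Real.measurable_log.abs).add measurable_const).pow_const e).aestronglyMeasurable
  rcases Nat.eq_zero_or_pos e with he | he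
  · subst he; simp [IntegrableOn]
  set s : ℝ := (1:ℝ)/(2*e) with hs_def
  have hse : (0:ℝ) < s := by positivity
  have htend := tendsto_aux e c he
  have hev : {θ : ℝ | (|Real.log θ| + c) * θ ^ s < 1} ∈ nhdsWithin (0:ℝ) (Set.Ioi 0) :=
    htend.eventually_lt_const (by norm_num : (0:ℝ) < 1)
  obtain ⟨u, hu, hsub⟩ := mem_nhdsGT_iff_exists_Ioc_subset.1 hev
  have hu0 : (0:ℝ) < u := hu
  set δ := min u b with hδ_def
  have hδ0 : 0 < δ := lt_min hu0 hb
  have hsplit : Set.Ioc (0:ℝ) b ⊆ Set.Ioc 0 δ ∪ Set.Icc δ b := by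
    intro x hx
    rcases le_or_gt x δ with h | h
    · exact Or.inl ⟨hx.1, h⟩
    · exact Or.inr ⟨h.le, hx.2⟩
  apply IntegrableOn.mono_set _ hsplit
  apply IntegrableOn.union
  · -- near 0: compare with θ ^ (-(1:ℝ)/2)
    have hint : IntegrableOn (fun θ : ℝ => θ ^ (-(1:ℝ)/2)) (Set.Ioc 0 δ) volume := by
      have := intervalIntegral.intervalIntegrable_rpow' (a := 0) (b := δ)
        (r := -(1:ℝ)/2) (by norm_num)
      rwa [intervalIntegrable_iff_integrableOn_Ioc_of_le hδ0.le] at this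
    apply Integrable.mono' hint (hmeas.mono_set (Set.Ioc_subset_Ioc_right (min_le_right u b)))
    filter_upwards [ae_restrict_mem measurableSet_Ioc] with θ hθ
    have hθ0 : 0 < θ := hθ.1
    have hmem : (|Real.log θ| + c) * θ ^ s < 1 := hsub ⟨hθ.1, hθ.2.trans (min_le_left u b)⟩
    have hpow : (0:ℝ) < θ ^ s := Real.rpow_pos_of_pos hθ0 s
    have habs0 : (0:ℝ) ≤ |Real.log θ| + c := add_nonneg (abs_nonneg _) hc
    have hle : |Real.log θ| + c ≤ θ ^ (-s) := by
      rw [Real.rpow_neg hθ0.le, ← one_div]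
      exact (le_div_iff₀ hpow).2 hmem.le
    have hpe : (θ ^ (-s)) ^ e = θ ^ (-(1:ℝ)/2) := by
      rw [← Real.rpow_natCast (θ ^ (-s)) e, ← Real.rpow_mul hθ0.le]
      congr 1
      have hne : (e:ℝ) ≠ 0 := Nat.cast_ne_zero.2 he.ne'
      rw [hs_def]; field_simp
    calc ‖(|Real.log θ| + c) ^ e‖ = (|Real.log θ| + c) ^ e := by
          rw [Real.norm_eq_abs, abs_of_nonneg (pow_nonneg habs0 e)]
      _ ≤ (θ ^ (-s)) ^ e := pow_le_pow_left₀ habs0 hle e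
      _ = θ ^ (-(1:ℝ)/2) := hpe
  · -- away from 0: continuous on compact
    apply ContinuousOn.integrableOn_compact isCompact_Icc
    apply ContinuousOn.pow
    apply ContinuousOn.add _ continuousOn_const
    apply ContinuousOn.abs
    intro x hx
    exact (Real.continuousAt_log (by have h1 := hx.1; have := lt_min hu0 hb; nlinarith : x ≠ 0)).continuousWithinAt


lemma A_abs_le {θ : ℝ} (h1 : 0 < θ) (h2 : θ ≤ π) : |A θ| ≤ |Real.log θ| + Real.log π := by
  have hx1 : 0 < θ / 2 := by linarith
  have hx2 : θ / 2 ≤ π / 2 := by linarith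
  have hsin : 0 < Real.sin (θ / 2) :=
    Real.sin_pos_of_pos_of_lt_pi hx1 (lt_of_le_of_lt hx2 (by linarith [Real.pi_pos]))
  have hs0 : 0 < 2 * Real.sin (θ / 2) := by linarith
  have hA : A θ = Real.log (2 * Real.sin (θ / 2)) := by
    unfold A; rw [abs_of_pos hs0]
  have hupper : 2 * Real.sin (θ / 2) ≤ θ := by
    have := Real.sin_le hx1.le; linarith
  have hlower : 2 / π * θ ≤ 2 * Real.sin (θ / 2) := by
    have := Real.mul_le_sin hx1.le hx2
    have hππ := Real.pi_pos
    calc 2 / π * θ = 2 * (2 / π * (θ / 2)) := by ring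
      _ ≤ 2 * Real.sin (θ / 2) := by linarith
  have hπ1 : (1:ℝ) ≤ π := by linarith [Real.pi_gt_three]
  have hlogπ : 0 ≤ Real.log π := Real.log_nonneg hπ1
  have hup : Real.log (2 * Real.sin (θ / 2)) ≤ Real.log θ :=
    Real.log_le_log hs0 hupper
  have hlow : Real.log θ - Real.log π ≤ Real.log (2 * Real.sin (θ / 2)) := by
    have h2π : 0 < 2 / π * θ := by positivity
    have := Real.log_le_log h2π hlower
    have hmul : Real.log (2 / π * θ) = Real.log (2 / π) + Real.log θ :=
      Real.log_mul (by positivity) (ne_of_gt h1)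
    have hquot : Real.log (2 / π) = Real.log 2 - Real.log π := Real.log_div (by norm_num) (by positivity)
    have h2n : 0 ≤ Real.log 2 := Real.log_nonneg (by norm_num)
    linarith
  rw [hA]
  rw [abs_le]
  constructor
  · have := neg_abs_le (Real.log θ); linarith
  · have := le_abs_self (Real.log θ); linarith

lemma A_pow_integrableOn_Ioc (e : ℕ) : IntegrableOn (fun θ => A θ ^ e) (Set.Ioc 0 π) volume := by
  have hmaj := logpow_int e (Real.log π) π Real.pi_pos
    (Real.log_nonneg (by linarith [Real.pi_gt_three]))
  apply Integrable.mono' hmaj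
    (((A_measurable.pow_const e)).aestronglyMeasurable)
  filter_upwards [ae_restrict_mem measurableSet_Ioc] with θ hθ
  have hb := A_abs_le hθ.1 hθ.2
  calc ‖A θ ^ e‖ = |A θ| ^ e := by rw [Real.norm_eq_abs, abs_pow]
    _ ≤ (|Real.log θ| + Real.log π) ^ e := pow_le_pow_left₀ (abs_nonneg _) hb e

lemma A_pow_ii_base (e : ℕ) : IntervalIntegrable (fun θ => A θ ^ e) volume (-π) π := by
  have h1 : IntervalIntegrable (fun θ => A θ ^ e) volume 0 π := by
    rw [intervalIntegrable_iff_integrableOn_Ioc_of_le Real.pi_pos.le]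
    exact A_pow_integrableOn_Ioc e
  have h2 : IntervalIntegrable (fun θ => A θ ^ e) volume (-π) 0 := by
    have h2' := (IntervalIntegrable.iff_comp_neg (by simp)).1 h1
    have heq : (fun x : ℝ => A (-x) ^ e) = fun x => A x ^ e := funext fun x => by rw [A_neg]
    rw [heq] at h2'
    simpa using h2'.symm
  exact h2.trans h1

lemma glue_aux (f : ℝ → ℝ) (h : ∀ m : ℤ, IntervalIntegrable f volume (-π + 2*m*π) (π + 2*m*π)) :
    ∀ N : ℕ, IntervalIntegrable f volume (-π - 2*N*π) (π + 2*N*π) := by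
  intro N
  induction N with
  | zero => simpa using h 0
  | succ n ih =>
    have hpos := h ((n:ℤ)+1)
    have hneg := h (-((n:ℤ)+1))
    have e1 : -π + 2*((-((n:ℤ)+1) : ℤ) : ℝ)*π = -π - 2*((n+1 : ℕ) : ℝ)*π := by push_cast; ring
    have e2 : π + 2*((-((n:ℤ)+1) : ℤ) : ℝ)*π = -π - 2*((n : ℕ) : ℝ)*π := by push_cast; ring
    have e3 : -π + 2*(((n:ℤ)+1 : ℤ) : ℝ)*π = π + 2*((n : ℕ) : ℝ)*π := by push_cast; ring
    have e4 : π + 2*(((n:ℤ)+1 : ℤ) : ℝ)*π = π + 2*((n+1 : ℕ) : ℝ)*π := by push_cast; ring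
    rw [e1, e2] at hneg
    rw [e3, e4] at hpos
    exact (hneg.trans ih).trans hpos

lemma glue_all (f : ℝ → ℝ) (h : ∀ m : ℤ, IntervalIntegrable f volume (-π + 2*m*π) (π + 2*m*π))
    (a b : ℝ) : IntervalIntegrable f volume a b := by
  obtain ⟨N, hNle⟩ := exists_nat_ge (max |a| |b|)
  have hπ := Real.pi_gt_three
  have hN0 : (0:ℝ) ≤ (N:ℝ) := Nat.cast_nonneg N
  have hlo : -π - 2*N*π ≤ -(max |a| |b|) := by nlinarith
  have hhi : max |a| |b| ≤ π + 2*N*π := by nlinarith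
  have hab : ∀ x : ℝ, |x| ≤ max |a| |b| → x ∈ Set.uIcc (-π - 2*N*π) (π + 2*N*π) := by
    intro x hx
    have h1 : -π - 2*N*π ≤ x := le_trans hlo (by linarith [neg_abs_le x])
    have h2 : x ≤ π + 2*N*π := le_trans (le_trans (le_abs_self x) hx) hhi
    rw [Set.uIcc_of_le (by nlinarith)]
    exact ⟨h1, h2⟩
  exact (glue_aux f h N).mono_set (Set.uIcc_subset_uIcc
    (hab a (le_max_left _ _)) (hab b (le_max_right _ _)))

lemma A_pow_ii (e : ℕ) (a b : ℝ) : IntervalIntegrable (fun θ => A θ ^ e) volume a b := by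
  apply glue_all _ _ a b
  intro m
  have h0 := (A_pow_ii_base e).comp_add_right (-(2*m*π))
  have heq : (fun x => A (x + -(2*(m:ℝ)*π)) ^ e) = fun x => A x ^ e := funext fun x => by
    have : x + -(2*(m:ℝ)*π) = x + 2*((-m : ℤ) : ℝ)*π := by push_cast; ring
    rw [this, A_shift]
  rw [heq] at h0
  convert h0 using 1 <;> ring



lemma nest_aux (ρ : ℝ) (L : List (ℕ × ℕ)) : Continuous (LsNest ρ L) ∧
    ∀ (p : ℕ × ℕ) (a b : ℝ), IntervalIntegrable
      (fun θ => θ ^ p.2 * A θ ^ (p.1 - 1 - p.2) * LsNest ρ L θ) volume a b := by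
  induction L with
  | nil =>
    refine ⟨continuous_const, fun p a b => ?_⟩
    have h := ((A_pow_ii (p.1 - 1 - p.2) a b).continuousOn_mul
      (continuous_pow p.2).continuousOn).mul_continuousOn
      (g := fun _ => (1:ℝ)) continuous_const.continuousOn
    simpa [LsNest] using h
  | cons q rest ih =>
    have hcont : Continuous (LsNest ρ (q :: rest)) := by
      show Continuous fun σ => ∫ θ in ρ..σ, θ ^ q.2 * A θ ^ (q.1 - 1 - q.2) * LsNest ρ rest θ
      exact intervalIntegral.continuous_primitive (fun a b => ih.2 q a b) ρ
    refine ⟨hcont, fun p a b => ?_⟩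
    exact ((A_pow_ii (p.1 - 1 - p.2) a b).continuousOn_mul
      (continuous_pow p.2).continuousOn).mul_continuousOn hcont.continuousOn

lemma add_pow' (x y : ℝ) (N : ℕ) :
    (x + y) ^ N = ∑ j : Fin (N+1), x ^ (N - (j:ℕ)) * y ^ (j:ℕ) * (Nat.choose N j : ℝ) := by
  rw [add_comm x y, add_pow]
  rw [← Fin.sum_univ_eq_sum_range (fun i => y ^ i * x ^ (N - i) * (N.choose i : ℝ)) (N+1)]
  exact Finset.sum_congr rfl fun j _ => by ring

lemma LsNest_nil (ρ σ : ℝ) : LsNest ρ [] σ = 1 := rfl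

lemma LsNest_cons (ρ : ℝ) (p : ℕ × ℕ) (rest : List (ℕ × ℕ)) (σ : ℝ) :
    LsNest ρ (p :: rest) σ
      = ∫ θ in ρ..σ, θ ^ p.2 * A θ ^ (p.1 - 1 - p.2) * LsNest ρ rest θ := rfl

lemma integral_sum_nest₂ {ι κ : Type*} [Fintype ι] [Fintype κ] (σ : ℝ) (coef : ι → κ → ℝ)
    (a b : ι → ℕ) (L : κ → List (ℕ × ℕ)) :
    (∫ θ in (0:ℝ)..σ, ∑ i : ι, ∑ jj : κ,
        coef i jj * (θ ^ b i * A θ ^ (a i - 1 - b i) * LsNest 0 (L jj) θ))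
      = ∑ i : ι, ∑ jj : κ, coef i jj * LsNest 0 ((a i, b i) :: L jj) σ := by
  have hint : ∀ (i : ι) (jj : κ), IntervalIntegrable
      (fun θ => coef i jj * (θ ^ b i * A θ ^ (a i - 1 - b i) * LsNest 0 (L jj) θ)) volume 0 σ :=
    fun i jj => ((nest_aux 0 (L jj)).2 (a i, b i) 0 σ).const_mul _
  have hsumint : ∀ i : ι, IntervalIntegrable
      (fun θ => ∑ jj : κ, coef i jj * (θ ^ b i * A θ ^ (a i - 1 - b i) * LsNest 0 (L jj) θ))
      volume 0 σ := by
    intro i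
    have h := IntervalIntegrable.sum (μ := volume) (a := (0:ℝ)) (b := σ) Finset.univ
      (f := fun (jj : κ) (θ : ℝ) => coef i jj * (θ ^ b i * A θ ^ (a i - 1 - b i) * LsNest 0 (L jj) θ))
      (fun jj _ => hint i jj)
    have heq : (∑ jj ∈ Finset.univ, fun (θ:ℝ) => coef i jj * (θ ^ b i * A θ ^ (a i - 1 - b i) * LsNest 0 (L jj) θ))
        = fun θ => ∑ jj : κ, coef i jj * (θ ^ b i * A θ ^ (a i - 1 - b i) * LsNest 0 (L jj) θ) := by
      funext θ
      exact Finset.sum_apply θ Finset.univ _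
    rwa [heq] at h
  have h1 := intervalIntegral.integral_finset_sum (μ := volume) (a := (0:ℝ)) (b := σ)
    (s := Finset.univ)
    (f := fun (i : ι) (θ : ℝ) => ∑ jj : κ,
      coef i jj * (θ ^ b i * A θ ^ (a i - 1 - b i) * LsNest 0 (L jj) θ))
    (fun i _ => hsumint i)
  rw [h1]
  refine Finset.sum_congr rfl fun i _ => ?_
  have h2 := intervalIntegral.integral_finset_sum (μ := volume) (a := (0:ℝ)) (b := σ)
    (s := Finset.univ)
    (f := fun (jj : κ) (θ : ℝ) =>
      coef i jj * (θ ^ b i * A θ ^ (a i - 1 - b i) * LsNest 0 (L jj) θ))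
    (fun jj _ => hint i jj)
  rw [h2]
  refine Finset.sum_congr rfl fun jj _ => ?_
  rw [intervalIntegral.integral_const_mul, LsNest_cons]

set_option maxHeartbeats 2000000 in
lemma nest_main (m : ℤ) : ∀ (n : ℕ) (k l : Fin n → ℕ) (σ : ℝ),
    LsNest (2*m*π) ((List.ofFn fun u => (k u, l u)).reverse) (2*m*π + σ) =
      ∑ j : (u : Fin n) → Fin (l u + 1),
        (2*m*π) ^ (∑ u, (j u : ℕ)) * (∏ u, (Nat.choose (l u) (j u) : ℝ)) *
          LsNest 0 ((List.ofFn fun u => (k u - j u, l u - j u)).reverse) σ := by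
  intro n
  induction n with
  | zero =>
    intro k l σ
    simp [LsNest]
  | succ n ih =>
    intro k l σ
    set c : ℝ := 2*(m:ℤ)*π with hc
    set kN := k (Fin.last n) with hkN
    set lN := l (Fin.last n) with hlN
    set rest := (List.ofFn fun u : Fin n => (k u.castSucc, l u.castSucc)).reverse with hrest
    set restJ := fun (j' : (u : Fin n) → Fin (l u.castSucc + 1)) =>
      (List.ofFn fun u : Fin n => (k u.castSucc - j' u, l u.castSucc - j' u)).reverse with hrestJ
    have hdec : (List.ofFn fun u : Fin (n+1) => (k u, l u)).reverse = (kN, lN) :: rest := by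
      rw [List.ofFn_succ', List.concat_eq_append, List.reverse_concat]
    have hexp : ∀ jN : Fin (lN + 1), kN - 1 - lN = (kN - (jN:ℕ)) - 1 - (lN - (jN:ℕ)) := by
      intro jN
      have := jN.isLt
      omega
    -- pointwise identity for the shifted integrand
    have hpoint : ∀ θ : ℝ,
        (θ + c) ^ lN * A (θ + c) ^ (kN - 1 - lN) * LsNest c rest (θ + c) =
        ∑ jN : Fin (lN + 1), ∑ j' : (u : Fin n) → Fin (l u.castSucc + 1),
          (c ^ ((∑ u, (j' u : ℕ)) + (jN:ℕ)) *
            ((∏ u, (Nat.choose (l u.castSucc) (j' u) : ℝ)) * (Nat.choose lN jN : ℝ))) *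
          (θ ^ (lN - (jN:ℕ)) * A θ ^ ((kN - (jN:ℕ)) - 1 - (lN - (jN:ℕ))) *
            LsNest 0 (restJ j') θ) := by
      intro θ
      have hA : A (θ + c) = A θ := A_shift θ m
      have hnest : LsNest c rest (θ + c) =
          ∑ j' : (u : Fin n) → Fin (l u.castSucc + 1),
            c ^ (∑ u, (j' u : ℕ)) * (∏ u, (Nat.choose (l u.castSucc) (j' u) : ℝ)) *
              LsNest 0 (restJ j') θ := by
        rw [add_comm θ c]
        exact ih (fun u => k u.castSucc) (fun u => l u.castSucc) θ
      rw [hA, hnest, add_pow' θ c lN, Finset.sum_mul, Finset.sum_mul]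
      refine Finset.sum_congr rfl fun jN _ => ?_
      rw [Finset.mul_sum]
      refine Finset.sum_congr rfl fun j' _ => ?_
      rw [← hexp jN]
      ring
    -- the left-hand side
    have hlhs : LsNest c ((List.ofFn fun u : Fin (n+1) => (k u, l u)).reverse) (c + σ) =
        ∑ jN : Fin (lN + 1), ∑ j' : (u : Fin n) → Fin (l u.castSucc + 1),
          (c ^ ((∑ u, (j' u : ℕ)) + (jN:ℕ)) *
            ((∏ u, (Nat.choose (l u.castSucc) (j' u) : ℝ)) * (Nat.choose lN jN : ℝ))) *
          LsNest 0 ((kN - (jN:ℕ), lN - (jN:ℕ)) :: restJ j') σ := by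
      rw [hdec, LsNest_cons]
      have hchg : (∫ θ in c..c+σ, θ ^ lN * A θ ^ (kN - 1 - lN) * LsNest c rest θ)
          = ∫ θ in (0:ℝ)..σ, (θ + c) ^ lN * A (θ + c) ^ (kN - 1 - lN) * LsNest c rest (θ + c) := by
        rw [intervalIntegral.integral_comp_add_right
          (fun θ => θ ^ lN * A θ ^ (kN - 1 - lN) * LsNest c rest θ) c, zero_add, add_comm σ c]
      rw [hchg]
      rw [intervalIntegral.integral_congr (g := fun θ =>
        ∑ jN : Fin (lN + 1), ∑ j' : (u : Fin n) → Fin (l u.castSucc + 1),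
          (c ^ ((∑ u, (j' u : ℕ)) + (jN:ℕ)) *
            ((∏ u, (Nat.choose (l u.castSucc) (j' u) : ℝ)) * (Nat.choose lN jN : ℝ))) *
          (θ ^ (lN - (jN:ℕ)) * A θ ^ ((kN - (jN:ℕ)) - 1 - (lN - (jN:ℕ))) *
            LsNest 0 (restJ j') θ)) (fun θ _ => hpoint θ)]
      rw [integral_sum_nest₂ σ
        (fun (jN : Fin (lN + 1)) (j' : (u : Fin n) → Fin (l u.castSucc + 1)) =>
          c ^ ((∑ u, (j' u : ℕ)) + (jN:ℕ)) *
            ((∏ u, (Nat.choose (l u.castSucc) (j' u) : ℝ)) * (Nat.choose lN jN : ℝ)))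
        (fun jN => kN - (jN:ℕ)) (fun jN => lN - (jN:ℕ)) restJ]
    rw [hlhs]
    -- reindex the right-hand side
    rw [← Equiv.sum_comp (Fin.snocEquiv (fun u : Fin (n+1) => Fin (l u + 1)))]
    rw [Fintype.sum_prod_type]
    refine Finset.sum_congr rfl fun jN _ => Finset.sum_congr rfl fun j' _ => ?_
    have hsnoc : ∀ u : Fin n,
        (Fin.snocEquiv (fun u : Fin (n+1) => Fin (l u + 1)) (jN, j')) u.castSucc = j' u := by
      intro u; simp [Fin.snocEquiv]
    have hsnocl : (Fin.snocEquiv (fun u : Fin (n+1) => Fin (l u + 1)) (jN, j')) (Fin.last n) = jN := by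
      simp [Fin.snocEquiv]
    have hsum : (∑ u : Fin (n+1),
        ((Fin.snocEquiv (fun u : Fin (n+1) => Fin (l u + 1)) (jN, j')) u : ℕ))
        = (∑ u : Fin n, (j' u : ℕ)) + (jN : ℕ) := by
      rw [Fin.sum_univ_castSucc]
      rw [hsnocl]
      congr 1
      exact Finset.sum_congr rfl fun u _ => by rw [hsnoc u]
    have hprod : (∏ u : Fin (n+1),
        (Nat.choose (l u) ((Fin.snocEquiv (fun u : Fin (n+1) => Fin (l u + 1)) (jN, j')) u) : ℝ))
        = (∏ u : Fin n, (Nat.choose (l u.castSucc) (j' u) : ℝ)) * (Nat.choose lN jN : ℝ) := by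
      rw [Fin.prod_univ_castSucc]
      rw [hsnocl]
      congr 1
      exact Finset.prod_congr rfl fun u _ => by rw [hsnoc u]
    have hlist : (List.ofFn fun u : Fin (n+1) =>
        (k u - ((Fin.snocEquiv (fun u : Fin (n+1) => Fin (l u + 1)) (jN, j')) u : ℕ),
         l u - ((Fin.snocEquiv (fun u : Fin (n+1) => Fin (l u + 1)) (jN, j')) u : ℕ))).reverse
        = (kN - (jN:ℕ), lN - (jN:ℕ)) :: restJ j' := by
      rw [List.ofFn_succ', List.concat_eq_append, List.reverse_concat]
      congr 1
      · rw [hsnocl]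
      · rw [hrestJ]
        congr 2
        funext u
        rw [hsnoc u]
    rw [hsum, hprod, hlist]

/-- Shift formula: `Ls_k^l(2mπ, 2mπ+σ) = Σ_{j ≤ l} (2mπ)^{|j|} binom(l,j) Ls_{k-j}^{l-j}(σ)`. -/
theorem stmt2 (m : ℤ) (σ : ℝ) (n : ℕ) (k l : Fin n → ℕ) (hk : ∀ u, 1 ≤ k u) :
    Ls k l (2 * m * π) (2 * m * π + σ) =
      ∑ j : (u : Fin n) → Fin (l u + 1),
        (2 * m * π) ^ (∑ u, (j u : ℕ)) * (∏ u, (Nat.choose (l u) (j u) : ℝ)) *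
          Ls (fun u => k u - j u) (fun u => l u - j u) 0 σ := by
  unfold Ls
  rw [nest_main m n k l σ, Finset.mul_sum]
  refine Finset.sum_congr rfl fun j _ => ?_
  ring
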